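/- arXiv:2009.07120 — 2 statements merged into one kernel-verified Lean document; each statement's English description precedes it below -/
import Mathlib

section
/- For every m >= 2 and t >= 0 with 5t+3 < 5m/2, the generalized Petersen graph GP(5m, 5t+3) admits a perfect 2-coloring with parameter matrix [[0,3],[2,1]]; explicitly, the map T with T(a_{5i+1}) = T(a_{5i+4}) = T(b_{5i+2}) = T(b_{5i+3}) = 1 and T of all other vertices equal to 2 is such a coloring. -/
/-- The generalized Petersen graph `GP n k`. Vertices are pairs `(s, i)` with
`s : Bool` (`false` = outer vertex `aᵢ`, `true` = inner vertex `bᵢ`) and `i : ZMod n`.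
Edges: `aᵢ aᵢ₊₁`, `aᵢ bᵢ`, `bᵢ bᵢ₊ₖ`. -/
def GP (n k : ℕ) : SimpleGraph (Bool × ZMod n) :=
  SimpleGraph.fromRel (fun v w =>
    (v.1 = false ∧ w.1 = false ∧ w.2 = v.2 + 1) ∨
    (v.1 = false ∧ w.1 = true ∧ w.2 = v.2) ∨
    (v.1 = true ∧ w.1 = true ∧ w.2 = v.2 + (k : ZMod n)))

/-- `T` is a perfect 2-coloring of `G` with parameter matrix `A`:
`T` is surjective onto the two colors (color `0` = white = "1", color `1` = black = "2"),
and every vertex of color `i` has exactly `A i j` neighbors of color `j`. -/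
def IsPerfectColoring {V : Type*} (G : SimpleGraph V) (T : V → Fin 2)
    (A : Matrix (Fin 2) (Fin 2) ℕ) : Prop :=
  Function.Surjective T ∧
  ∀ v : V, ∀ j : Fin 2, {w | G.Adj v w ∧ T w = j}.ncard = A (T v) j

lemma GP_adj_false (n k : ℕ) (hn : (1 : ZMod n) ≠ 0) (i : ZMod n) (w : Bool × ZMod n) :
    (GP n k).Adj (false, i) w ↔ w = (false, i+1) ∨ w = (false, i-1) ∨ w = (true, i) := by
  constructor
  · rintro ⟨hne, h | h⟩
    · rcases h with ⟨_, h1, h2⟩ | ⟨_, h1, h2⟩ | ⟨h1, _, _⟩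
      · left; exact Prod.ext h1 h2
      · right; right; exact Prod.ext h1 h2
      · simp at h1
    · rcases h with ⟨h1, _, h2⟩ | ⟨h1, h2, _⟩ | ⟨h1, h2, _⟩
      · right; left
        refine Prod.ext h1 ?_
        simp only at h2 ⊢
        rw [h2]; ring
      · simp at h2
      · simp at h2
  · rintro (rfl | rfl | rfl)
    · refine ⟨?_, Or.inl (Or.inl ⟨rfl, rfl, rfl⟩)⟩
      simp only [ne_eq, Prod.mk.injEq, true_and]
      intro h; exact hn (by linear_combination -h)
    · refine ⟨?_, Or.inr (Or.inl ⟨rfl, rfl, by simp⟩)⟩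
      simp only [ne_eq, Prod.mk.injEq, true_and]
      intro h; exact hn (by linear_combination h)
    · exact ⟨by simp, Or.inl (Or.inr (Or.inl ⟨rfl, rfl, rfl⟩))⟩

lemma GP_adj_true (n k : ℕ) (hk0 : (k : ZMod n) ≠ 0) (i : ZMod n) (w : Bool × ZMod n) :
    (GP n k).Adj (true, i) w ↔ w = (true, i+k) ∨ w = (true, i-k) ∨ w = (false, i) := by
  constructor
  · rintro ⟨hne, h | h⟩
    · rcases h with ⟨h1, _, _⟩ | ⟨h1, _, _⟩ | ⟨_, h1, h2⟩
      · simp at h1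
      · simp at h1
      · left; exact Prod.ext h1 h2
    · rcases h with ⟨h1, h2, _⟩ | ⟨h1, h2, h3⟩ | ⟨h1, _, h2⟩
      · simp at h2
      · right; right; exact Prod.ext h1 h3.symm
      · right; left
        refine Prod.ext h1 ?_
        simp only at h2 ⊢
        rw [h2]; ring
  · rintro (rfl | rfl | rfl)
    · refine ⟨?_, Or.inl (Or.inr (Or.inr ⟨rfl, rfl, rfl⟩))⟩
      simp only [ne_eq, Prod.mk.injEq, true_and]
      intro h; exact hk0 (by linear_combination -h)
    · refine ⟨?_, Or.inr (Or.inr (Or.inr ⟨rfl, rfl, by ring⟩))⟩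
      simp only [ne_eq, Prod.mk.injEq, true_and]
      intro h; exact hk0 (by linear_combination h)
    · exact ⟨by simp, Or.inr (Or.inr (Or.inl ⟨rfl, rfl, rfl⟩))⟩

open Classical in
lemma ncard_three {V : Type*} (x y z : V) (hxy : x ≠ y) (hxz : x ≠ z) (hyz : y ≠ z)
    (P : V → Prop) :
    {w | (w = x ∨ w = y ∨ w = z) ∧ P w}.ncard =
      (if P x then 1 else 0) + (if P y then 1 else 0) + (if P z then 1 else 0) := by
  by_cases hx : P x <;> by_cases hy : P y <;> by_cases hz : P z <;>
    simp only [hx, hy, hz, if_true, if_false]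
  · have : {w | (w = x ∨ w = y ∨ w = z) ∧ P w} = {x, y, z} := by
      ext w; simp only [Set.mem_setOf_eq, Set.mem_insert_iff, Set.mem_singleton_iff]
      constructor
      · rintro ⟨h, -⟩; exact h
      · rintro (rfl | rfl | rfl) <;> simp [hx, hy, hz]
    rw [this, Set.ncard_insert_of_notMem (by simp [hxy, hxz]) ((Set.finite_singleton _).insert _),
      Set.ncard_pair hyz]
  · have : {w | (w = x ∨ w = y ∨ w = z) ∧ P w} = {x, y} := by
      ext w; simp only [Set.mem_setOf_eq, Set.mem_insert_iff, Set.mem_singleton_iff]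
      constructor
      · rintro ⟨rfl | rfl | rfl, h⟩ <;> tauto
      · rintro (rfl | rfl) <;> simp [hx, hy]
    rw [this, Set.ncard_pair hxy]
  · have : {w | (w = x ∨ w = y ∨ w = z) ∧ P w} = {x, z} := by
      ext w; simp only [Set.mem_setOf_eq, Set.mem_insert_iff, Set.mem_singleton_iff]
      constructor
      · rintro ⟨rfl | rfl | rfl, h⟩ <;> tauto
      · rintro (rfl | rfl) <;> simp [hx, hz]
    rw [this, Set.ncard_pair hxz]
  · have : {w | (w = x ∨ w = y ∨ w = z) ∧ P w} = {x} := by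
      ext w; simp only [Set.mem_setOf_eq, Set.mem_singleton_iff]
      constructor
      · rintro ⟨rfl | rfl | rfl, h⟩ <;> tauto
      · rintro rfl; simp [hx]
    rw [this, Set.ncard_singleton]
  · have : {w | (w = x ∨ w = y ∨ w = z) ∧ P w} = {y, z} := by
      ext w; simp only [Set.mem_setOf_eq, Set.mem_insert_iff, Set.mem_singleton_iff]
      constructor
      · rintro ⟨rfl | rfl | rfl, h⟩ <;> tauto
      · rintro (rfl | rfl) <;> simp [hy, hz]
    rw [this, Set.ncard_pair hyz]
  · have : {w | (w = x ∨ w = y ∨ w = z) ∧ P w} = {y} := by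
      ext w; simp only [Set.mem_setOf_eq, Set.mem_singleton_iff]
      constructor
      · rintro ⟨rfl | rfl | rfl, h⟩ <;> tauto
      · rintro rfl; simp [hy]
    rw [this, Set.ncard_singleton]
  · have : {w | (w = x ∨ w = y ∨ w = z) ∧ P w} = {z} := by
      ext w; simp only [Set.mem_setOf_eq, Set.mem_singleton_iff]
      constructor
      · rintro ⟨rfl | rfl | rfl, h⟩ <;> tauto
      · rintro rfl; simp [hz]
    rw [this, Set.ncard_singleton]
  · have : {w | (w = x ∨ w = y ∨ w = z) ∧ P w} = ∅ := by
      ext w; simp only [Set.mem_setOf_eq, Set.mem_empty_iff_false, iff_false]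
      rintro ⟨rfl | rfl | rfl, h⟩ <;> tauto
    rw [this, Set.ncard_empty]

lemma val_add_mod5 (n : ℕ) [NeZero n] (h5 : 5 ∣ n) (i : ZMod n) (b : ℕ) :
    ((i + (b : ZMod n)).val) % 5 = (i.val + b) % 5 := by
  rw [ZMod.val_add, ZMod.val_natCast, Nat.mod_mod_of_dvd _ h5, Nat.add_mod,
    Nat.mod_mod_of_dvd _ h5, ← Nat.add_mod]

theorem stmt_11 (m t : ℕ) (hm : 2 ≤ m) (hk : 2 * (5 * t + 3) < 5 * m) :
    IsPerfectColoring (GP (5 * m) (5 * t + 3))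
      (fun v =>
        if (v.1 = false ∧ (v.2.val % 5 = 1 ∨ v.2.val % 5 = 4)) ∨
           (v.1 = true ∧ (v.2.val % 5 = 2 ∨ v.2.val % 5 = 3)) then 0 else 1)
      !![0, 3; 2, 1] := by
  haveI : NeZero (5*m) := ⟨by omega⟩
  have h5 : (5:ℕ) ∣ 5*m := ⟨m, rfl⟩
  haveI : Fact (1 < 5*m) := ⟨by omega⟩
  have h1 : (1 : ZMod (5*m)) ≠ 0 := one_ne_zero
  have hk0 : ((5*t+3 : ℕ) : ZMod (5*m)) ≠ 0 := by
    rw [Ne, ZMod.natCast_eq_zero_iff]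
    intro hd; have := Nat.le_of_dvd (by omega) hd; omega
  have h2 : (2 : ZMod (5*m)) ≠ 0 := by
    have : ((2:ℕ) : ZMod (5*m)) ≠ 0 := by
      rw [Ne, ZMod.natCast_eq_zero_iff]
      intro hd; have := Nat.le_of_dvd (by omega) hd; omega
    simpa using this
  have h2k : ((2*(5*t+3) : ℕ) : ZMod (5*m)) ≠ 0 := by
    rw [Ne, ZMod.natCast_eq_zero_iff]
    intro hd; have := Nat.le_of_dvd (by omega) hd; omega
  have hsub1 : ((5*m-1 : ℕ) : ZMod (5*m)) = -1 := by
    rw [Nat.cast_sub (by omega : 1 ≤ 5*m), ZMod.natCast_self, zero_sub, Nat.cast_one]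
  have hsubk : ((5*m-(5*t+3) : ℕ) : ZMod (5*m)) = -((5*t+3:ℕ) : ZMod (5*m)) := by
    rw [Nat.cast_sub (by omega : 5*t+3 ≤ 5*m), ZMod.natCast_self, zero_sub]
  constructor
  · intro j
    fin_cases j
    · exact ⟨(false, (1 : ZMod (5*m))), by simp [ZMod.val_one]⟩
    · exact ⟨(false, (0 : ZMod (5*m))), by simp⟩
  · rintro ⟨s, i⟩ j
    have hv1 : (i + 1).val % 5 = (i.val + 1) % 5 := by
      have := val_add_mod5 (5*m) h5 i 1; simpa using this
    have hvm1 : (i - 1).val % 5 = (i.val + (5*m-1)) % 5 := by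
      have := val_add_mod5 (5*m) h5 i (5*m-1)
      rw [hsub1] at this
      simpa [sub_eq_add_neg] using this
    have hvk : (i + ((5*t+3 : ℕ) : ZMod (5*m))).val % 5 = (i.val + (5*t+3)) % 5 :=
      val_add_mod5 _ h5 i _
    have hvmk : (i - ((5*t+3 : ℕ) : ZMod (5*m))).val % 5 = (i.val + (5*m-(5*t+3))) % 5 := by
      have := val_add_mod5 (5*m) h5 i (5*m-(5*t+3))
      rw [hsubk] at this
      simpa [sub_eq_add_neg] using this
    have hiv : i.val % 5 = 0 ∨ i.val % 5 = 1 ∨ i.val % 5 = 2 ∨ i.val % 5 = 3 ∨ i.val % 5 = 4 := by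
      omega
    cases s
    · -- outer vertex
      have hd1 : ((false, i+1) : Bool × ZMod (5*m)) ≠ (false, i-1) := by
        simp only [ne_eq, Prod.mk.injEq, true_and]
        intro h; exact h2 (by linear_combination h)
      have hd2 : ((false, i+1) : Bool × ZMod (5*m)) ≠ (true, i) := by simp
      have hd3 : ((false, i-1) : Bool × ZMod (5*m)) ≠ (true, i) := by simp
      simp only [GP_adj_false (5*m) (5*t+3) h1 i]
      rw [ncard_three _ _ _ hd1 hd2 hd3]
      rcases hiv with hr | hr | hr | hr | hr
      · have e1 : (i + 1).val % 5 = 1 := by omega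
        have e2 : (i - 1).val % 5 = 4 := by omega
        simp only [e1, e2, hr]
        fin_cases j <;> decide
      · have e1 : (i + 1).val % 5 = 2 := by omega
        have e2 : (i - 1).val % 5 = 0 := by omega
        simp only [e1, e2, hr]
        fin_cases j <;> decide
      · have e1 : (i + 1).val % 5 = 3 := by omega
        have e2 : (i - 1).val % 5 = 1 := by omega
        simp only [e1, e2, hr]
        fin_cases j <;> decide
      · have e1 : (i + 1).val % 5 = 4 := by omega
        have e2 : (i - 1).val % 5 = 2 := by omega
        simp only [e1, e2, hr]
        fin_cases j <;> decide
      · have e1 : (i + 1).val % 5 = 0 := by omega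
        have e2 : (i - 1).val % 5 = 3 := by omega
        simp only [e1, e2, hr]
        fin_cases j <;> decide
    · -- inner vertex
      have hd1 : ((true, i + ((5*t+3 : ℕ) : ZMod (5*m))) : Bool × ZMod (5*m)) ≠ (true, i - ((5*t+3 : ℕ) : ZMod (5*m))) := by
        simp only [ne_eq, Prod.mk.injEq, true_and]
        intro h
        apply h2k
        push_cast at h ⊢
        linear_combination h
      have hd2 : ((true, i + ((5*t+3 : ℕ) : ZMod (5*m))) : Bool × ZMod (5*m)) ≠ (false, i) := by simp
      have hd3 : ((true, i - ((5*t+3 : ℕ) : ZMod (5*m))) : Bool × ZMod (5*m)) ≠ (false, i) := by simp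
      simp only [GP_adj_true (5*m) (5*t+3) hk0 i]
      rw [ncard_three _ _ _ hd1 hd2 hd3]
      rcases hiv with hr | hr | hr | hr | hr
      · have e3 : (i + ((5*t+3 : ℕ) : ZMod (5*m))).val % 5 = 3 := by omega
        have e4 : (i - ((5*t+3 : ℕ) : ZMod (5*m))).val % 5 = 2 := by omega
        simp only [e3, e4, hr]
        fin_cases j <;> decide
      · have e3 : (i + ((5*t+3 : ℕ) : ZMod (5*m))).val % 5 = 4 := by omega
        have e4 : (i - ((5*t+3 : ℕ) : ZMod (5*m))).val % 5 = 3 := by omega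
        simp only [e3, e4, hr]
        fin_cases j <;> decide
      · have e3 : (i + ((5*t+3 : ℕ) : ZMod (5*m))).val % 5 = 0 := by omega
        have e4 : (i - ((5*t+3 : ℕ) : ZMod (5*m))).val % 5 = 4 := by omega
        simp only [e3, e4, hr]
        fin_cases j <;> decide
      · have e3 : (i + ((5*t+3 : ℕ) : ZMod (5*m))).val % 5 = 1 := by omega
        have e4 : (i - ((5*t+3 : ℕ) : ZMod (5*m))).val % 5 = 0 := by omega
        simp only [e3, e4, hr]
        fin_cases j <;> decide
      · have e3 : (i + ((5*t+3 : ℕ) : ZMod (5*m))).val % 5 = 2 := by omega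
        have e4 : (i - ((5*t+3 : ℕ) : ZMod (5*m))).val % 5 = 1 := by omega
        simp only [e3, e4, hr]
        fin_cases j <;> decide
end

section
/- For n >= 7, there is no perfect 2-coloring T of GP(n,3) with parameter matrix [[1,2],[2,1]] such that for some index i, T(a_i) = T(b_i) = T(a_{i+2}) = 1 and T(a_{i+1}) = T(b_{i+1}) = T(b_{i+2}) = 2. -/
lemma zmod_cast_ne {n k : ℕ} (h0 : 0 < k) (h : k < n) : (k : ZMod n) ≠ 0 := by
  intro hh
  rw [ZMod.natCast_eq_zero_iff] at hh
  have := Nat.le_of_dvd h0 hh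
  omega

lemma one_ne {n : ℕ} (hn : 7 ≤ n) : (1 : ZMod n) ≠ 0 := by
  have := zmod_cast_ne (n := n) (k := 1) (by norm_num) (by omega); simpa using this

lemma two_ne {n : ℕ} (hn : 7 ≤ n) : (2 : ZMod n) ≠ 0 := by
  have := zmod_cast_ne (n := n) (k := 2) (by norm_num) (by omega)
  have h : ((2:ℕ) : ZMod n) = (2 : ZMod n) := by push_cast; ring
  rwa [h] at this

lemma three_ne {n : ℕ} (hn : 7 ≤ n) : (3 : ZMod n) ≠ 0 := by
  have := zmod_cast_ne (n := n) (k := 3) (by norm_num) (by omega)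
  have h : ((3:ℕ) : ZMod n) = (3 : ZMod n) := by push_cast; ring
  rwa [h] at this

lemma six_ne {n : ℕ} (hn : 7 ≤ n) : (6 : ZMod n) ≠ 0 := by
  have := zmod_cast_ne (n := n) (k := 6) (by norm_num) (by omega)
  have h : ((6:ℕ) : ZMod n) = (6 : ZMod n) := by push_cast; ring
  rwa [h] at this

lemma adj_outer {n : ℕ} (hn : 7 ≤ n) (j : ZMod n) (w : Bool × ZMod n) :
    (GP n 3).Adj (false, j) w ↔ w = (false, j - 1) ∨ w = (false, j + 1) ∨ w = (true, j) := by
  obtain ⟨s, m⟩ := w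
  simp only [GP, SimpleGraph.fromRel_adj, ne_eq, Prod.mk.injEq, Bool.false_eq_true,
    Bool.true_eq_false, false_and, and_false, true_and, and_true, or_false, false_or]
  cases s
  · simp only [true_and, and_true, Bool.false_eq_true, false_and, and_false, or_false, false_or]
    constructor
    · rintro ⟨hne, h | h⟩
      · exact Or.inr h
      · exact Or.inl (by rw [h]; ring)
    · rintro (h | h)
      · subst h
        exact ⟨fun hh => one_ne hn (by linear_combination hh), Or.inr (by ring)⟩
      · subst h
        exact ⟨fun hh => one_ne hn (by linear_combination -hh), Or.inl rfl⟩
  · simp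

lemma adj_inner {n : ℕ} (hn : 7 ≤ n) (j : ZMod n) (w : Bool × ZMod n) :
    (GP n 3).Adj (true, j) w ↔ w = (true, j - 3) ∨ w = (true, j + 3) ∨ w = (false, j) := by
  obtain ⟨s, m⟩ := w
  have hc : ((3:ℕ) : ZMod n) = (3 : ZMod n) := by push_cast; ring
  simp only [GP, SimpleGraph.fromRel_adj, ne_eq, Prod.mk.injEq, Bool.false_eq_true,
    Bool.true_eq_false, false_and, and_false, true_and, and_true, or_false, false_or, hc]
  cases s
  · simp [eq_comm]
  · simp only [true_and, and_true, Bool.true_eq_false, false_and, and_false, or_false, false_or]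
    constructor
    · rintro ⟨hne, h | h⟩
      · exact Or.inr h
      · exact Or.inl (by rw [h]; ring)
    · rintro (h | h)
      · subst h
        exact ⟨fun hh => three_ne hn (by linear_combination hh), Or.inr (by ring)⟩
      · subst h
        exact ⟨fun hh => three_ne hn (by linear_combination -hh), Or.inl rfl⟩

lemma same_one {V : Type*} [DecidableEq V] {G : SimpleGraph V} {T : V → Fin 2}
    (h : IsPerfectColoring G T !![1, 2; 2, 1])
    (v x y z : V)
    (hadj : ∀ w, G.Adj v w ↔ w = x ∨ w = y ∨ w = z)
    (hxy : x ≠ y) (hxz : x ≠ z) (hyz : y ≠ z) :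
    (if T x = T v then 1 else 0) + (if T y = T v then 1 else 0) +
      (if T z = T v then 1 else 0) = 1 := by
  have h2 := h.2 v (T v)
  have hset : {w | G.Adj v w ∧ T w = T v} =
      ↑(({x, y, z} : Finset V).filter (fun w => T w = T v)) := by
    ext w
    simp [hadj w, Finset.mem_filter, and_comm]
  rw [hset, Set.ncard_coe_finset, Finset.card_filter] at h2
  rw [Finset.sum_insert (by simp [hxy, hxz]), Finset.sum_insert (by simp [hyz]),
    Finset.sum_singleton] at h2
  have hA : (!![1, 2; 2, 1] : Matrix (Fin 2) (Fin 2) ℕ) (T v) (T v) = 1 := by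
    have : T v = 0 ∨ T v = 1 := by omega
    rcases this with h' | h' <;> simp [h']
  rw [hA] at h2
  omega

theorem stmt_16 (n : ℕ) (hn : 7 ≤ n) (T : Bool × ZMod n → Fin 2) :
    ¬ (IsPerfectColoring (GP n 3) T !![1, 2; 2, 1] ∧
      ∃ i : ZMod n, T (false, i) = 0 ∧ T (true, i) = 0 ∧ T (false, i + 2) = 0 ∧
        T (false, i + 1) = 1 ∧ T (true, i + 1) = 1 ∧ T (true, i + 2) = 1) := by
  rintro ⟨hpc, i, hA0, hB0, hA2, hA1, hB1, hB2⟩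
  have out : ∀ j : ZMod n,
      (if T (false, j - 1) = T (false, j) then 1 else 0) +
      (if T (false, j + 1) = T (false, j) then 1 else 0) +
      (if T (true, j) = T (false, j) then 1 else 0) = 1 := fun j =>
    same_one hpc (false, j) (false, j - 1) (false, j + 1) (true, j) (adj_outer hn j)
      (fun h => two_ne hn (by have := congrArg Prod.snd h; simp at this; linear_combination -this))
      (by simp) (by simp)
  have inn : ∀ j : ZMod n,
      (if T (true, j - 3) = T (true, j) then 1 else 0) +
      (if T (true, j + 3) = T (true, j) then 1 else 0) +
      (if T (false, j) = T (true, j) then 1 else 0) = 1 := fun j =>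
    same_one hpc (true, j) (true, j - 3) (true, j + 3) (false, j) (adj_inner hn j)
      (fun h => six_ne hn (by have := congrArg Prod.snd h; simp at this; linear_combination -this))
      (by simp) (by simp)
  -- Step 1: T b_{i+3} = 1
  have hB3 : T (true, i + 3) = 1 := by
    have e := inn i
    rw [hB0, hA0] at e
    split_ifs at e <;> omega
  -- Step 2: T b_{i+4} = 0
  have hB4 : T (true, i + 4) = 0 := by
    have e := inn (i + 1)
    rw [show i + 1 + 3 = i + 4 by ring] at e
    rw [hB1, hA1] at e
    split_ifs at e <;> omega
  -- Step 3: T a_{i+3} = 0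
  have hA3 : T (false, i + 3) = 0 := by
    have e := out (i + 2)
    rw [show i + 2 - 1 = i + 1 by ring, show i + 2 + 1 = i + 3 by ring] at e
    rw [hA2, hA1, hB2] at e
    split_ifs at e <;> omega
  -- Step 4: T a_{i+4} = 1
  have hA4 : T (false, i + 4) = 1 := by
    have e := out (i + 3)
    rw [show i + 3 - 1 = i + 2 by ring, show i + 3 + 1 = i + 4 by ring] at e
    rw [hA3, hA2, hB3] at e
    split_ifs at e <;> omega
  -- Step 5: T a_{i+5} = 1
  have hA5 : T (false, i + 5) = 1 := by
    have e := out (i + 4)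
    rw [show i + 4 - 1 = i + 3 by ring, show i + 4 + 1 = i + 5 by ring] at e
    rw [hA4, hA3, hB4] at e
    split_ifs at e <;> omega
  -- Step 6: T a_{i+6} = 0
  have hA6 : T (false, i + 6) = 0 := by
    have e := out (i + 5)
    rw [show i + 5 - 1 = i + 4 by ring, show i + 5 + 1 = i + 6 by ring] at e
    rw [hA5, hA4] at e
    split_ifs at e <;> omega
  -- Step 7: T b_{i+7} = 0
  have hB7 : T (true, i + 7) = 0 := by
    have e := inn (i + 4)
    rw [show i + 4 - 3 = i + 1 by ring, show i + 4 + 3 = i + 7 by ring] at e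
    rw [hB4, hB1, hA4] at e
    split_ifs at e <;> omega
  -- Step 8: T b_{i+6} = 1
  have hB6 : T (true, i + 6) = 1 := by
    have e := inn (i + 3)
    rw [show i + 3 - 3 = i by ring, show i + 3 + 3 = i + 6 by ring] at e
    rw [hB3, hB0, hA3] at e
    split_ifs at e <;> omega
  -- Step 9: T a_{i+7} = 0
  have hA7 : T (false, i + 7) = 0 := by
    have e := out (i + 6)
    rw [show i + 6 - 1 = i + 5 by ring, show i + 6 + 1 = i + 7 by ring] at e
    rw [hA6, hA5, hB6] at e
    split_ifs at e <;> omega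
  -- Final contradiction at a_{i+7}
  have e := out (i + 7)
  rw [show i + 7 - 1 = i + 6 by ring, show i + 7 + 1 = i + 8 by ring] at e
  rw [hA7, hA6, hB7] at e
  split_ifs at e <;> omega
end
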